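/- Let P(X^{(1)}, X^{(2)}) and Q(X^{(1)}, X^{(2)}) be polynomials in two sets of d variables, each homogeneous in each variable set separately. Then the operator norms of their symmetric tensorizations (viewed as matrices indexed by monomial multi-indices) satisfy ‖T_sym(PQ)‖_op ≤ ‖T_sym(P)‖_op · ‖T_sym(Q)‖_op. -/

import Mathlib

open MvPolynomial

/-- The exponent (monomial) associated to an index tuple within one variable sort. -/
noncomputable def expOf {d k : ℕ} (w : Fin k → Fin d) : Fin d →₀ ℕ :=
  ∑ i, Finsupp.single (w i) 1

/-- The number of index tuples giving the same monomial as `w`. -/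
noncomputable def countOf {d k : ℕ} (w : Fin k → Fin d) : ℕ :=
  Nat.card {w' : Fin k → Fin d // expOf w' = expOf w}

/-- The exponent in `ℝ[X⁽¹⁾,X⁽²⁾]` associated to a pair of index tuples. -/
noncomputable def expOf2 {d m₁ m₂ : ℕ} (w₁ : Fin m₁ → Fin d) (w₂ : Fin m₂ → Fin d) :
    (Fin d ⊕ Fin d) →₀ ℕ :=
  (∑ i, Finsupp.single (Sum.inl (w₁ i)) 1) + ∑ i, Finsupp.single (Sum.inr (w₂ i)) 1

/-- The symmetric tensorization of a polynomial that is homogeneous of degrees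
`(m₁,m₂)` in the two variable sets, viewed as a `d^{m₁} × d^{m₂}` matrix: each
coefficient is divided evenly among the index pairs producing its monomial. -/
noncomputable def Tsym {d : ℕ} (m₁ m₂ : ℕ) (p : MvPolynomial (Fin d ⊕ Fin d) ℝ) :
    Matrix (Fin m₁ → Fin d) (Fin m₂ → Fin d) ℝ :=
  fun w₁ w₂ => p.coeff (expOf2 w₁ w₂) / ((countOf w₁ : ℝ) * (countOf w₂ : ℝ))

/-- `p` is homogeneous of degree `m₁` in the first variable set and `m₂` in the
second. -/
def IsBiHomogeneous {d : ℕ} (p : MvPolynomial (Fin d ⊕ Fin d) ℝ) (m₁ m₂ : ℕ) : Prop :=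
  ∀ s ∈ p.support, (∑ i, s (Sum.inl i)) = m₁ ∧ (∑ i, s (Sum.inr i)) = m₂

/-- Operator (spectral) norm of a rectangular matrix via Euclidean spaces. -/
noncomputable def matOpNorm {d m₁ m₂ : ℕ}
    (M : Matrix (Fin m₁ → Fin d) (Fin m₂ → Fin d) ℝ) : ℝ :=
  ‖LinearMap.toContinuousLinearMap (Matrix.toEuclideanLin M)‖

section aux
open Finset
variable {d k m n : ℕ}

lemma expOf_apply (w : Fin k → Fin d) (j : Fin d) :
    expOf w j = (univ.filter fun i => w i = j).card := by
  classical
  rw [expOf, Finsupp.finset_sum_apply, card_filter]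
  congr 1; ext i
  rw [Finsupp.single_apply]

lemma expOf_comp_perm (w : Fin k → Fin d) (π : Equiv.Perm (Fin k)) :
    expOf (w ∘ π) = expOf w := by
  simpa [expOf] using Equiv.sum_comp π (fun i => Finsupp.single (w i) (1:ℕ))

lemma exists_perm {w w' : Fin k → Fin d} (h : expOf w' = expOf w) :
    ∃ π : Equiv.Perm (Fin k), w' = w ∘ π := by
  classical
  have hcard : ∀ j, Fintype.card {i // w' i = j} = Fintype.card {i // w i = j} := by
    intro j
    simp only [Fintype.card_subtype]
    rw [← expOf_apply, ← expOf_apply, h]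
  let e : ∀ j : Fin d, {i // w' i = j} ≃ {i // w i = j} :=
    fun j => Fintype.equivOfCardEq (hcard j)
  let π : Equiv.Perm (Fin k) :=
    ((Equiv.sigmaFiberEquiv w').symm.trans (Equiv.sigmaCongrRight e)).trans
      (Equiv.sigmaFiberEquiv w)
  refine ⟨π, funext fun i => ?_⟩
  show w' i = w (π i)
  have : π i = (e (w' i) ⟨i, rfl⟩ : {i' // w i' = w' i}) := rfl
  rw [this]
  exact ((e (w' i) ⟨i, rfl⟩).2).symm


/-- the class of `w` as a finset -/
noncomputable def cls (w : Fin k → Fin d) : Finset (Fin k → Fin d) :=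
  univ.filter fun w' => expOf w' = expOf w


lemma countOf_eq_card_cls (w : Fin k → Fin d) : countOf w = (cls w).card := by
  classical
  rw [countOf, Nat.card_eq_fintype_card, Fintype.card_subtype]
  rfl

lemma mem_cls_self (w : Fin k → Fin d) : w ∈ cls w := by simp [cls]

lemma countOf_pos (w : Fin k → Fin d) : 0 < countOf w := by
  rw [countOf_eq_card_cls]
  exact card_pos.mpr ⟨w, mem_cls_self w⟩

lemma countOf_eq_of_expOf_eq {w w' : Fin k → Fin d} (h : expOf w' = expOf w) :
    countOf w' = countOf w := by
  simp only [countOf, h]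


lemma mem_cls_iff {w w' : Fin k → Fin d} : w' ∈ cls w ↔ expOf w' = expOf w := by
  simp [cls]

lemma card_fiber_eq (w : Fin k → Fin d) {w' : Fin k → Fin d} (h : w' ∈ cls w) :
    (univ.filter fun σ : Equiv.Perm (Fin k) => w ∘ σ = w').card =
    (univ.filter fun σ : Equiv.Perm (Fin k) => w ∘ σ = w).card := by
  classical
  obtain ⟨π, hπ⟩ := exists_perm (mem_cls_iff.mp h)
  refine Finset.card_bij' (fun σ _ => π.symm.trans σ) (fun σ _ => π.trans σ) ?_ ?_ ?_ ?_
  · intro σ hσ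
    simp only [mem_filter, mem_univ, true_and] at hσ ⊢
    funext x
    have : w (σ (π.symm x)) = w' (π.symm x) := congrFun hσ (π.symm x)
    simp only [Function.comp, Equiv.trans_apply]
    rw [this, hπ]; simp
  · intro σ hσ
    simp only [mem_filter, mem_univ, true_and] at hσ ⊢
    funext x
    have : w (σ (π x)) = w (π x) := congrFun hσ (π x)
    simp only [Function.comp, Equiv.trans_apply]
    rw [this, hπ]; rfl
  · intro σ _; ext x; simp
  · intro σ _; ext x; simp

lemma card_fiber_mul_countOf (w : Fin k → Fin d) {w' : Fin k → Fin d} (h : w' ∈ cls w) :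
    (univ.filter fun σ : Equiv.Perm (Fin k) => w ∘ σ = w').card * countOf w =
      k.factorial := by
  classical
  have hpart : (univ : Finset (Equiv.Perm (Fin k))).card =
      ∑ w'' ∈ cls w, (univ.filter fun σ : Equiv.Perm (Fin k) => w ∘ σ = w'').card := by
    refine Finset.card_eq_sum_card_fiberwise ?_
    intro σ _
    exact mem_cls_iff.mpr (expOf_comp_perm w σ)
  have hconst : ∀ w'' ∈ cls w,
      (univ.filter fun σ : Equiv.Perm (Fin k) => w ∘ σ = w'').card =
      (univ.filter fun σ : Equiv.Perm (Fin k) => w ∘ σ = w).card := fun w'' h'' =>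
    card_fiber_eq w h''
  rw [Finset.sum_congr rfl hconst, Finset.sum_const, smul_eq_mul] at hpart
  rw [card_fiber_eq w h, countOf_eq_card_cls]
  simp only [Finset.card_univ, Fintype.card_perm, Fintype.card_fin] at hpart
  rw [mul_comm, ← hpart]

lemma countOf_mul_sum_perm (w : Fin k → Fin d) (F : (Fin k → Fin d) → ℝ) :
    (countOf w : ℝ) * ∑ σ : Equiv.Perm (Fin k), F (w ∘ σ) =
      (k.factorial : ℝ) * ∑ w' ∈ cls w, F w' := by
  classical
  rw [Finset.sum_comp F (fun σ : Equiv.Perm (Fin k) => w ∘ σ)]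
  have himg : (univ : Finset (Equiv.Perm (Fin k))).image (fun σ : Equiv.Perm (Fin k) => w ∘ ⇑σ) = cls w := by
    ext w'
    simp only [mem_image, mem_univ, true_and, mem_cls_iff]
    constructor
    · rintro ⟨σ, rfl⟩; exact expOf_comp_perm w σ
    · intro h; obtain ⟨π, hπ⟩ := exists_perm h; exact ⟨π, hπ.symm⟩
  rw [himg, Finset.mul_sum, Finset.mul_sum]
  refine Finset.sum_congr rfl fun w' hw' => ?_
  rw [nsmul_eq_mul, ← mul_assoc, ← Nat.cast_mul, mul_comm (countOf w)]
  rw [card_fiber_mul_countOf w hw']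

lemma expOf_eq_toFinsupp (w : Fin k → Fin d) :
    expOf w = Multiset.toFinsupp (Multiset.map w univ.val) := by
  classical
  ext j
  rw [expOf_apply, Multiset.toFinsupp_apply, Multiset.count_map]
  rw [Finset.card, Finset.filter_val]
  congr 1
  exact Multiset.filter_congr (fun a _ => by exact eq_comm)

lemma exists_expOf (a : Fin d →₀ ℕ) (h : ∑ j, a j = m) :
    ∃ w : Fin m → Fin d, expOf w = a := by
  classical
  have hcard : Multiset.card (Finsupp.toMultiset a) = m := by
    rw [Finsupp.card_toMultiset, Finsupp.sum_fintype _ _ (fun _ => rfl)]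
    exact h
  set l := (Finsupp.toMultiset a).toList with hldef
  have hl : l.length = m := by rw [Multiset.length_toList, hcard]
  have key : ∃ w : Fin l.length → Fin d, expOf w = a := by
    refine ⟨l.get, ?_⟩
    rw [expOf_eq_toFinsupp, Fin.univ_val_map, List.ofFn_get, hldef,
      Multiset.coe_toList, Finsupp.toMultiset_toFinsupp]
  rw [hl] at key
  exact key

lemma expOf2_eq {w₁ : Fin m → Fin d} {w₂ : Fin n → Fin d} :
    expOf2 w₁ w₂ = Finsupp.sumElim (expOf w₁) (expOf w₂) := by
  classical
  ext s
  cases s with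
  | inl j =>
    simp [expOf2, expOf, Finsupp.finset_sum_apply, Finsupp.single_apply]
  | inr j =>
    simp [expOf2, expOf, Finsupp.finset_sum_apply, Finsupp.single_apply]

lemma sumElim_add {α β : Type*} (a a' : α →₀ ℕ) (b b' : β →₀ ℕ) :
    Finsupp.sumElim a b + Finsupp.sumElim a' b' = Finsupp.sumElim (a + a') (b + b') := by
  ext s
  cases s <;> simp

lemma sumElim_inj {α β : Type*} {a a' : α →₀ ℕ} {b b' : β →₀ ℕ}
    (h : Finsupp.sumElim a b = Finsupp.sumElim a' b') : a = a' ∧ b = b' := by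
  constructor
  · ext x; simpa using DFunLike.congr_fun h (Sum.inl x)
  · ext x; simpa using DFunLike.congr_fun h (Sum.inr x)

lemma eq_sumElim (s : (Fin d ⊕ Fin d) →₀ ℕ) :
    s = Finsupp.sumElim (Finsupp.sumFinsuppEquivProdFinsupp s).1
      (Finsupp.sumFinsuppEquivProdFinsupp s).2 := by
  ext x
  cases x with
  | inl j => simp [Finsupp.fst_sumFinsuppEquivProdFinsupp]
  | inr j => simp [Finsupp.snd_sumFinsuppEquivProdFinsupp]


/-- split equiv -/
def sp {d m n : ℕ} : (Fin (m + n) → Fin d) ≃ ((Fin m → Fin d) × (Fin n → Fin d)) :=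
  (Equiv.arrowCongr finSumFinEquiv.symm (Equiv.refl (Fin d))).trans
    (Equiv.sumArrowEquivProdArrow _ _ _)


lemma sp_fst (w : Fin (m + n) → Fin d) (i : Fin m) :
    (sp w).1 i = w (Fin.castAdd n i) := by
  simp [sp, Equiv.sumArrowEquivProdArrow]

lemma sp_snd (w : Fin (m + n) → Fin d) (i : Fin n) :
    (sp w).2 i = w (Fin.natAdd m i) := by
  simp [sp, Equiv.sumArrowEquivProdArrow]

lemma expOf_sp (w : Fin (m + n) → Fin d) :
    expOf w = expOf (sp w).1 + expOf (sp w).2 := by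
  have h1 : expOf (sp w).1 = ∑ i : Fin m, Finsupp.single (w (Fin.castAdd n i)) (1:ℕ) := by
    rw [expOf]; exact Finset.sum_congr rfl fun i _ => by rw [sp_fst]
  have h2 : expOf (sp w).2 = ∑ i : Fin n, Finsupp.single (w (Fin.natAdd m i)) (1:ℕ) := by
    rw [expOf]; exact Finset.sum_congr rfl fun i _ => by rw [sp_snd]
  rw [expOf, Fin.sum_univ_add, h1, h2]

end aux

section normlemmas
open Finset
variable {I J : Type*} [Fintype I] [Fintype J] [DecidableEq I] [DecidableEq J]

noncomputable def mnorm (M : Matrix I J ℝ) : ℝ :=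
  ‖LinearMap.toContinuousLinearMap (Matrix.toEuclideanLin M)‖


lemma mnorm_nonneg (M : Matrix I J ℝ) : 0 ≤ mnorm M := norm_nonneg _

lemma toEuclideanLin_apply' (M : Matrix I J ℝ) (v : EuclideanSpace ℝ J) (i : I) :
    (Matrix.toEuclideanLin M) v i = ∑ j, M i j * v j := by
  rw [Matrix.toEuclideanLin_apply]
  simp [Matrix.mulVec, dotProduct]

lemma norm_toEuclideanLin_le (M : Matrix I J ℝ) (v : EuclideanSpace ℝ J) :
    ‖(Matrix.toEuclideanLin M) v‖ ≤ mnorm M * ‖v‖ := by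
  have := (LinearMap.toContinuousLinearMap (Matrix.toEuclideanLin M)).le_opNorm v
  simpa [mnorm] using this

lemma inner_eq_double_sum (M : Matrix I J ℝ) (u : EuclideanSpace ℝ I)
    (v : EuclideanSpace ℝ J) :
    (inner ℝ u ((Matrix.toEuclideanLin M) v) : ℝ) = ∑ i, ∑ j, u i * M i j * v j := by
  rw [PiLp.inner_apply]
  refine Finset.sum_congr rfl fun i _ => ?_
  simp only [RCLike.inner_apply, conj_trivial, toEuclideanLin_apply', Finset.mul_sum, Finset.sum_mul]
  exact Finset.sum_congr rfl fun j _ => by ring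

lemma bilinear_le_mnorm (M : Matrix I J ℝ) (u : EuclideanSpace ℝ I)
    (v : EuclideanSpace ℝ J) :
    |∑ i, ∑ j, u i * M i j * v j| ≤ mnorm M * ‖u‖ * ‖v‖ := by
  rw [← inner_eq_double_sum]
  calc |(inner ℝ u ((Matrix.toEuclideanLin M) v) : ℝ)|
      ≤ ‖u‖ * ‖(Matrix.toEuclideanLin M) v‖ := abs_real_inner_le_norm _ _
    _ ≤ ‖u‖ * (mnorm M * ‖v‖) :=
        mul_le_mul_of_nonneg_left (norm_toEuclideanLin_le M v) (norm_nonneg _)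
    _ = mnorm M * ‖u‖ * ‖v‖ := by ring

lemma mnorm_le_of_bilinear {C : ℝ} (hC : 0 ≤ C) (M : Matrix I J ℝ)
    (h : ∀ (u : EuclideanSpace ℝ I) (v : EuclideanSpace ℝ J),
      |∑ i, ∑ j, u i * M i j * v j| ≤ C * ‖u‖ * ‖v‖) :
    mnorm M ≤ C := by
  refine ContinuousLinearMap.opNorm_le_bound _ hC fun v => ?_
  have hcoe : (LinearMap.toContinuousLinearMap (Matrix.toEuclideanLin M)) v
      = (Matrix.toEuclideanLin M) v := rfl
  rw [hcoe]
  set w : EuclideanSpace ℝ I := (Matrix.toEuclideanLin M) v with hw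
  have h2 : ‖w‖ ^ 2 ≤ (C * ‖v‖) * ‖w‖ := by
    have : ‖w‖ ^ 2 = (inner ℝ w w : ℝ) := (real_inner_self_eq_norm_sq w).symm
    rw [this, inner_eq_double_sum]
    calc ∑ i, ∑ j, w i * M i j * v j ≤ |∑ i, ∑ j, w i * M i j * v j| := le_abs_self _
      _ ≤ C * ‖w‖ * ‖v‖ := h w v
      _ = (C * ‖v‖) * ‖w‖ := by ring
  rcases eq_or_lt_of_le (norm_nonneg w) with h0 | h0
  · rw [← h0]; positivity
  · have h3 : ‖w‖ * ‖w‖ ≤ (C * ‖v‖) * ‖w‖ := by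
      calc ‖w‖ * ‖w‖ = ‖w‖ ^ 2 := (pow_two _).symm
        _ ≤ (C * ‖v‖) * ‖w‖ := h2
    exact le_of_mul_le_mul_right h3 h0

lemma norm_comp_equiv {I' : Type*} [Fintype I'] (e : I ≃ I') (u : EuclideanSpace ℝ I')
    (v : EuclideanSpace ℝ I) (hv : ∀ i, v i = u (e i)) : ‖v‖ = ‖u‖ := by
  rw [EuclideanSpace.norm_eq, EuclideanSpace.norm_eq]
  congr 1
  refine Fintype.sum_equiv e _ _ fun i => ?_
  rw [hv]

end normlemmas

section kron
open Finset

lemma es_norm_sq {K : Type*} [Fintype K] (x : EuclideanSpace ℝ K) :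
    ‖x‖ ^ 2 = ∑ i, (x i) ^ 2 := by
  rw [EuclideanSpace.norm_eq, Real.sq_sqrt (by positivity)]
  exact Finset.sum_congr rfl fun i _ => by rw [Real.norm_eq_abs, sq_abs]


variable {I₁ I₂ J₁ J₂ : Type*} [Fintype I₁] [Fintype I₂] [Fintype J₁] [Fintype J₂]
  [DecidableEq I₁] [DecidableEq I₂] [DecidableEq J₁] [DecidableEq J₂]

lemma kron_bilinear_le (A : Matrix I₁ I₂ ℝ) (B : Matrix J₁ J₂ ℝ)
    (U : EuclideanSpace ℝ (I₁ × J₁)) (V : EuclideanSpace ℝ (I₂ × J₂)) :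
    |∑ p : I₁ × J₁, ∑ q : I₂ × J₂, U p * (A p.1 q.1 * B p.2 q.2) * V q|
      ≤ mnorm A * mnorm B * ‖U‖ * ‖V‖ := by
  classical
  set f : J₁ → EuclideanSpace ℝ I₁ := fun y₁ => WithLp.toLp 2 (fun x₁ => U (x₁, y₁)) with hf
  set h : J₁ → EuclideanSpace ℝ I₂ :=
    fun y₁ => WithLp.toLp 2 (fun x₂ => ∑ y₂, B y₁ y₂ * V (x₂, y₂)) with hh
  have key : ∀ y₁, (inner ℝ (f y₁) ((Matrix.toEuclideanLin A) (h y₁)) : ℝ)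
      = ∑ x₁, ∑ x₂, ∑ y₂, U (x₁, y₁) * (A x₁ x₂ * B y₁ y₂) * V (x₂, y₂) := by
    intro y₁
    rw [inner_eq_double_sum]
    refine Finset.sum_congr rfl fun x₁ _ => Finset.sum_congr rfl fun x₂ _ => ?_
    show U (x₁, y₁) * A x₁ x₂ * (∑ y₂, B y₁ y₂ * V (x₂, y₂)) = _
    rw [Finset.mul_sum]
    exact Finset.sum_congr rfl fun y₂ _ => by ring
  have lhs_eq : ∑ p : I₁ × J₁, ∑ q : I₂ × J₂, U p * (A p.1 q.1 * B p.2 q.2) * V q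
      = ∑ y₁, (inner ℝ (f y₁) ((Matrix.toEuclideanLin A) (h y₁)) : ℝ) := by
    rw [Fintype.sum_prod_type, Finset.sum_comm]
    refine Finset.sum_congr rfl fun y₁ _ => ?_
    rw [key y₁]
    refine Finset.sum_congr rfl fun x₁ _ => ?_
    rw [Fintype.sum_prod_type]
  -- Cauchy-Schwarz over y₁
  set F : EuclideanSpace ℝ J₁ := WithLp.toLp 2 (fun y₁ => ‖f y₁‖) with hF
  set H : EuclideanSpace ℝ J₁ := WithLp.toLp 2 (fun y₁ => ‖h y₁‖) with hH
  have normF : ‖F‖ = ‖U‖ := by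
    have h1 : ‖F‖ ^ 2 = ‖U‖ ^ 2 := by
      rw [es_norm_sq, es_norm_sq]
      rw [Fintype.sum_prod_type, Finset.sum_comm]
      refine Finset.sum_congr rfl fun y₁ _ => ?_
      show ‖f y₁‖ ^ 2 = _
      rw [es_norm_sq]
    rw [← Real.sqrt_sq (norm_nonneg F), h1, Real.sqrt_sq (norm_nonneg U)]
  set g : I₂ → EuclideanSpace ℝ J₂ := fun x₂ => WithLp.toLp 2 (fun y₂ => V (x₂, y₂)) with hg
  have normH : ‖H‖ ≤ mnorm B * ‖V‖ := by
    have h1 : ‖H‖ ^ 2 ≤ (mnorm B * ‖V‖) ^ 2 := by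
      rw [es_norm_sq]
      have step : ∑ y₁, H y₁ ^ 2 = ∑ x₂, ‖(Matrix.toEuclideanLin B) (g x₂)‖ ^ 2 := by
        have : ∀ y₁, H y₁ ^ 2 = ∑ x₂, ((Matrix.toEuclideanLin B) (g x₂) y₁) ^ 2 := by
          intro y₁
          show ‖h y₁‖ ^ 2 = _
          rw [es_norm_sq]
          exact Finset.sum_congr rfl fun x₂ _ => by rw [toEuclideanLin_apply']
        rw [Finset.sum_congr rfl fun y₁ _ => this y₁, Finset.sum_comm]
        exact Finset.sum_congr rfl fun x₂ _ => (es_norm_sq _).symm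
      rw [step]
      calc ∑ x₂, ‖(Matrix.toEuclideanLin B) (g x₂)‖ ^ 2
          ≤ ∑ x₂, (mnorm B * ‖g x₂‖) ^ 2 := by
            refine Finset.sum_le_sum fun x₂ _ => ?_
            have := norm_toEuclideanLin_le B (g x₂)
            exact pow_le_pow_left₀ (norm_nonneg _) this 2
        _ = (mnorm B * ‖V‖) ^ 2 := by
            have : ∀ x₂, (mnorm B * ‖g x₂‖) ^ 2
                = mnorm B ^ 2 * ∑ y₂, V (x₂, y₂) ^ 2 := by
              intro x₂; rw [mul_pow, es_norm_sq]
            rw [Finset.sum_congr rfl fun x₂ _ => this x₂, ← Finset.mul_sum, mul_pow,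
              es_norm_sq, Fintype.sum_prod_type]
    have h2 : 0 ≤ mnorm B * ‖V‖ := mul_nonneg (mnorm_nonneg _) (norm_nonneg _)
    nlinarith [norm_nonneg H]
  have CS : ∑ y₁, ‖f y₁‖ * ‖h y₁‖ ≤ ‖U‖ * (mnorm B * ‖V‖) := by
    have hFH : (inner ℝ F H : ℝ) = ∑ y₁, ‖f y₁‖ * ‖h y₁‖ := by
      rw [PiLp.inner_apply]
      exact Finset.sum_congr rfl fun y₁ _ => by
        simp [hF, hH, RCLike.inner_apply, mul_comm]
    calc ∑ y₁, ‖f y₁‖ * ‖h y₁‖ = (inner ℝ F H : ℝ) := hFH.symm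
      _ ≤ ‖F‖ * ‖H‖ := real_inner_le_norm F H
      _ ≤ ‖U‖ * (mnorm B * ‖V‖) := by
          rw [normF]
          exact mul_le_mul_of_nonneg_left normH (norm_nonneg _)
  calc |∑ p : I₁ × J₁, ∑ q : I₂ × J₂, U p * (A p.1 q.1 * B p.2 q.2) * V q|
      = |∑ y₁, (inner ℝ (f y₁) ((Matrix.toEuclideanLin A) (h y₁)) : ℝ)| := by rw [lhs_eq]
    _ ≤ ∑ y₁, |(inner ℝ (f y₁) ((Matrix.toEuclideanLin A) (h y₁)) : ℝ)| :=
        Finset.abs_sum_le_sum_abs _ _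
    _ ≤ ∑ y₁, mnorm A * (‖f y₁‖ * ‖h y₁‖) := by
        refine Finset.sum_le_sum fun y₁ _ => ?_
        calc |(inner ℝ (f y₁) ((Matrix.toEuclideanLin A) (h y₁)) : ℝ)|
            ≤ ‖f y₁‖ * ‖(Matrix.toEuclideanLin A) (h y₁)‖ := abs_real_inner_le_norm _ _
          _ ≤ ‖f y₁‖ * (mnorm A * ‖h y₁‖) :=
              mul_le_mul_of_nonneg_left (norm_toEuclideanLin_le A _) (norm_nonneg _)
          _ = mnorm A * (‖f y₁‖ * ‖h y₁‖) := by ring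
    _ = mnorm A * ∑ y₁, ‖f y₁‖ * ‖h y₁‖ := by rw [Finset.mul_sum]
    _ ≤ mnorm A * (‖U‖ * (mnorm B * ‖V‖)) :=
        mul_le_mul_of_nonneg_left CS (mnorm_nonneg _)
    _ = mnorm A * mnorm B * ‖U‖ * ‖V‖ := by ring

end kron

section comb
open Finset

noncomputable def cnt (d m : ℕ) (a : Fin d →₀ ℕ) : ℕ :=
  ((univ : Finset (Fin m → Fin d)).filter fun x => expOf x = a).card

lemma countOf_eq_cnt {d m : ℕ} (x : Fin m → Fin d) : countOf x = cnt d m (expOf x) :=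
  countOf_eq_card_cls x


variable {d m₁ m₂ n₁ n₂ : ℕ} (P Q : MvPolynomial (Fin d ⊕ Fin d) ℝ)

/-- the "decomposition" finset -/
noncomputable def Dset (d m n : ℕ) (e : Fin d →₀ ℕ) :
    Finset ((Fin m → Fin d) × (Fin n → Fin d)) :=
  univ.filter fun z => expOf z.1 + expOf z.2 = e

noncomputable def gmap (d m n : ℕ) :
    ((Fin m → Fin d) × (Fin n → Fin d)) → ((Fin d →₀ ℕ) × (Fin d →₀ ℕ)) :=
  fun z => (expOf z.1, expOf z.2)

lemma sum_cls_eq_sum_Dset {m n : ℕ} (w : Fin (m + n) → Fin d)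
    (f : (Fin (m + n) → Fin d) → ℝ) :
    ∑ w' ∈ cls w, f w' = ∑ z ∈ Dset d m n (expOf w), f (sp.symm z) := by
  classical
  refine Finset.sum_nbij' (fun w' => sp w') (fun z => sp.symm z) ?_ ?_ ?_ ?_ ?_
  · intro w' hw'
    simp only [Dset, mem_filter, mem_univ, true_and]
    rw [← expOf_sp, mem_cls_iff.mp hw']
  · intro z hz
    simp only [Dset, mem_filter, mem_univ, true_and] at hz
    rw [mem_cls_iff, expOf_sp (sp.symm z)]
    simpa using hz
  · intro w' _; simp
  · intro z _; simp
  · intro w' _; simp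

lemma mem_Dset_image {m n : ℕ} {e : Fin d →₀ ℕ} {p : (Fin d →₀ ℕ) × (Fin d →₀ ℕ)}
    (hp : p ∈ (Dset d m n e).image (gmap d m n)) :
    p.1 + p.2 = e ∧ cnt d m p.1 ≠ 0 ∧ cnt d n p.2 ≠ 0 := by
  classical
  obtain ⟨z, hz, hgz⟩ := Finset.mem_image.mp hp
  simp only [Dset, mem_filter, mem_univ, true_and] at hz
  obtain ⟨h1, h2⟩ : expOf z.1 = p.1 ∧ expOf z.2 = p.2 := by
    constructor <;> simp [← hgz, gmap]
  refine ⟨by rw [← h1, ← h2]; exact hz, ?_, ?_⟩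
  · exact Finset.card_ne_zero_of_mem (Finset.mem_filter.mpr ⟨Finset.mem_univ _, h1⟩)
  · exact Finset.card_ne_zero_of_mem (Finset.mem_filter.mpr ⟨Finset.mem_univ _, h2⟩)

lemma card_Dset_fiber {m n : ℕ} {e : Fin d →₀ ℕ} {p : (Fin d →₀ ℕ) × (Fin d →₀ ℕ)}
    (hp : p ∈ (Dset d m n e).image (gmap d m n)) :
    ((Dset d m n e).filter fun z => gmap d m n z = p).card = cnt d m p.1 * cnt d n p.2 := by
  classical
  have hpe : p.1 + p.2 = e := (mem_Dset_image hp).1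
  have hset : ((Dset d m n e).filter fun z => gmap d m n z = p) =
      (univ.filter fun x : Fin m → Fin d => expOf x = p.1) ×ˢ
      (univ.filter fun y : Fin n → Fin d => expOf y = p.2) := by
    ext z
    simp only [Dset, gmap, Finset.mem_filter, Finset.mem_product, mem_univ, true_and,
      Prod.ext_iff]
    constructor
    · rintro ⟨-, h1, h2⟩; exact ⟨h1, h2⟩
    · rintro ⟨h1, h2⟩
      refine ⟨?_, h1, h2⟩
      rw [h1, h2, hpe]
  rw [hset, Finset.card_product]
  rfl

lemma identB (hP : IsBiHomogeneous P m₁ m₂) (hQ : IsBiHomogeneous Q n₁ n₂)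
    (w₁ : Fin (m₁ + n₁) → Fin d) (w₂ : Fin (m₂ + n₂) → Fin d) :
    ∑ w₁' ∈ cls w₁, ∑ w₂' ∈ cls w₂,
      Tsym m₁ m₂ P (sp w₁').1 (sp w₂').1 * Tsym n₁ n₂ Q (sp w₁').2 (sp w₂').2
      = MvPolynomial.coeff (expOf2 w₁ w₂) (P * Q) := by
  classical
  set e₁ := expOf w₁ with he₁
  set e₂ := expOf w₂ with he₂
  set A₁ := (Dset d m₁ n₁ e₁).image (gmap d m₁ n₁) with hA₁
  set A₂ := (Dset d m₂ n₂ e₂).image (gmap d m₂ n₂) with hA₂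
  set G : ((Fin d →₀ ℕ) × (Fin d →₀ ℕ)) → ((Fin d →₀ ℕ) × (Fin d →₀ ℕ)) → ℝ :=
    fun p₁ p₂ => (MvPolynomial.coeff (Finsupp.sumElim p₁.1 p₂.1) P /
        ((cnt d m₁ p₁.1 : ℝ) * (cnt d m₂ p₂.1 : ℝ))) *
      (MvPolynomial.coeff (Finsupp.sumElim p₁.2 p₂.2) Q /
        ((cnt d n₁ p₁.2 : ℝ) * (cnt d n₂ p₂.2 : ℝ))) with hG
  -- Step 1: rewrite LHS as sum over Dsets of G ∘ gmap
  have step1 : ∑ w₁' ∈ cls w₁, ∑ w₂' ∈ cls w₂,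
      Tsym m₁ m₂ P (sp w₁').1 (sp w₂').1 * Tsym n₁ n₂ Q (sp w₁').2 (sp w₂').2
      = ∑ z₁ ∈ Dset d m₁ n₁ e₁, ∑ z₂ ∈ Dset d m₂ n₂ e₂,
          G (gmap d m₁ n₁ z₁) (gmap d m₂ n₂ z₂) := by
    rw [sum_cls_eq_sum_Dset w₁]
    refine Finset.sum_congr rfl fun z₁ _ => ?_
    rw [sum_cls_eq_sum_Dset w₂]
    refine Finset.sum_congr rfl fun z₂ _ => ?_
    simp only [Tsym, hG, gmap, Equiv.apply_symm_apply]
    rw [expOf2_eq, expOf2_eq, countOf_eq_cnt, countOf_eq_cnt, countOf_eq_cnt, countOf_eq_cnt]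
  -- Step 2: fiber both sums
  have step2 : ∑ z₁ ∈ Dset d m₁ n₁ e₁, ∑ z₂ ∈ Dset d m₂ n₂ e₂,
      G (gmap d m₁ n₁ z₁) (gmap d m₂ n₂ z₂)
      = ∑ p₂ ∈ A₂, ∑ p₁ ∈ A₁,
          ((cnt d m₁ p₁.1 * cnt d n₁ p₁.2) * (cnt d m₂ p₂.1 * cnt d n₂ p₂.2) : ℝ) *
            G p₁ p₂ := by
    have inner : ∀ z₁ ∈ Dset d m₁ n₁ e₁, ∑ z₂ ∈ Dset d m₂ n₂ e₂,
        G (gmap d m₁ n₁ z₁) (gmap d m₂ n₂ z₂)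
        = ∑ p₂ ∈ A₂, ((cnt d m₂ p₂.1 * cnt d n₂ p₂.2 : ℕ)) •
            G (gmap d m₁ n₁ z₁) p₂ := by
      intro z₁ _
      rw [Finset.sum_comp (G (gmap d m₁ n₁ z₁)) (gmap d m₂ n₂)]
      exact Finset.sum_congr rfl fun p₂ hp₂ => by rw [card_Dset_fiber hp₂]
    rw [Finset.sum_congr rfl inner, Finset.sum_comm]
    refine Finset.sum_congr rfl fun p₂ _ => ?_
    rw [← Finset.smul_sum, Finset.sum_comp (fun p₁ => G p₁ p₂) (gmap d m₁ n₁),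
      Finset.smul_sum]
    refine Finset.sum_congr rfl fun p₁ hp₁ => ?_
    rw [card_Dset_fiber hp₁, smul_smul, nsmul_eq_mul]
    push_cast
    ring
  -- Step 3: cancel the counts
  have step3 : ∑ p₂ ∈ A₂, ∑ p₁ ∈ A₁,
      ((cnt d m₁ p₁.1 * cnt d n₁ p₁.2) * (cnt d m₂ p₂.1 * cnt d n₂ p₂.2) : ℝ) * G p₁ p₂
      = ∑ p₂ ∈ A₂, ∑ p₁ ∈ A₁,
          MvPolynomial.coeff (Finsupp.sumElim p₁.1 p₂.1) P *
            MvPolynomial.coeff (Finsupp.sumElim p₁.2 p₂.2) Q := by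
    refine Finset.sum_congr rfl fun p₂ hp₂ => Finset.sum_congr rfl fun p₁ hp₁ => ?_
    obtain ⟨-, h1, h2⟩ := mem_Dset_image hp₁
    obtain ⟨-, h3, h4⟩ := mem_Dset_image hp₂
    rw [hG]
    have c1 : (cnt d m₁ p₁.1 : ℝ) ≠ 0 := Nat.cast_ne_zero.mpr h1
    have c2 : (cnt d n₁ p₁.2 : ℝ) ≠ 0 := Nat.cast_ne_zero.mpr h2
    have c3 : (cnt d m₂ p₂.1 : ℝ) ≠ 0 := Nat.cast_ne_zero.mpr h3
    have c4 : (cnt d n₂ p₂.2 : ℝ) ≠ 0 := Nat.cast_ne_zero.mpr h4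
    field_simp
  -- Step 4: identify with the antidiagonal sum
  have step4 : ∑ p₂ ∈ A₂, ∑ p₁ ∈ A₁,
      MvPolynomial.coeff (Finsupp.sumElim p₁.1 p₂.1) P *
        MvPolynomial.coeff (Finsupp.sumElim p₁.2 p₂.2) Q
      = MvPolynomial.coeff (expOf2 w₁ w₂) (P * Q) := by
    rw [Finset.sum_comm, expOf2_eq, MvPolynomial.coeff_mul]
    rw [← Finset.sum_product']
    set Φ : (((Fin d →₀ ℕ) × (Fin d →₀ ℕ)) × ((Fin d →₀ ℕ) × (Fin d →₀ ℕ))) →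
        (((Fin d ⊕ Fin d) →₀ ℕ) × ((Fin d ⊕ Fin d) →₀ ℕ)) :=
      fun pp => (Finsupp.sumElim pp.1.1 pp.2.1, Finsupp.sumElim pp.1.2 pp.2.2) with hΦ
    have hinj : ∀ x ∈ A₁ ×ˢ A₂, ∀ y ∈ A₁ ×ˢ A₂, Φ x = Φ y → x = y := by
      rintro ⟨⟨x11, x12⟩, x21, x22⟩ - ⟨⟨y11, y12⟩, y21, y22⟩ - hxy
      simp only [hΦ, Prod.mk.injEq] at hxy ⊢
      obtain ⟨h1, h2⟩ := sumElim_inj hxy.1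
      obtain ⟨h3, h4⟩ := sumElim_inj hxy.2
      exact ⟨⟨h1, h3⟩, h2, h4⟩
    calc ∑ x ∈ A₁ ×ˢ A₂, MvPolynomial.coeff (Finsupp.sumElim x.1.1 x.2.1) P *
          MvPolynomial.coeff (Finsupp.sumElim x.1.2 x.2.2) Q
        = ∑ x ∈ A₁ ×ˢ A₂, MvPolynomial.coeff (Φ x).1 P * MvPolynomial.coeff (Φ x).2 Q :=
          Finset.sum_congr rfl fun x _ => rfl
      _ = ∑ s ∈ (A₁ ×ˢ A₂).image Φ, MvPolynomial.coeff s.1 P * MvPolynomial.coeff s.2 Q :=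
          (Finset.sum_image
            (f := fun s : ((Fin d ⊕ Fin d) →₀ ℕ) × ((Fin d ⊕ Fin d) →₀ ℕ) =>
              MvPolynomial.coeff s.1 P * MvPolynomial.coeff s.2 Q) hinj).symm
      _ = ∑ s ∈ antidiagonal (Finsupp.sumElim (expOf w₁) (expOf w₂)),
            MvPolynomial.coeff s.1 P * MvPolynomial.coeff s.2 Q := ?_
    refine Finset.sum_subset ?_ ?_
    · intro s hs
      obtain ⟨pp, hpp, rfl⟩ := Finset.mem_image.mp hs
      rw [Finset.mem_product] at hpp
      have g1 := (mem_Dset_image hpp.1).1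
      have g2 := (mem_Dset_image hpp.2).1
      rw [Finset.HasAntidiagonal.mem_antidiagonal]
      show Finsupp.sumElim pp.1.1 pp.2.1 + Finsupp.sumElim pp.1.2 pp.2.2 = _
      rw [sumElim_add]
      rw [g1, g2]
    · intro s hs hsnot
      by_contra hne
      have hne1 : MvPolynomial.coeff s.1 P ≠ 0 := fun h => hne (by rw [h, zero_mul])
      have hne2 : MvPolynomial.coeff s.2 Q ≠ 0 := fun h => hne (by rw [h, mul_zero])
      have hs1 := hP s.1 (MvPolynomial.mem_support_iff.mpr hne1)
      have hs2 := hQ s.2 (MvPolynomial.mem_support_iff.mpr hne2)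
      set aL := (Finsupp.sumFinsuppEquivProdFinsupp s.1).1 with haL
      set aR := (Finsupp.sumFinsuppEquivProdFinsupp s.1).2 with haR
      set bL := (Finsupp.sumFinsuppEquivProdFinsupp s.2).1 with hbL
      set bR := (Finsupp.sumFinsuppEquivProdFinsupp s.2).2 with hbR
      obtain ⟨x₁, hx₁⟩ := exists_expOf (m := m₁) aL (by
        rw [haL]
        calc ∑ j, (Finsupp.sumFinsuppEquivProdFinsupp s.1).1 j
            = ∑ j, s.1 (Sum.inl j) := by
              exact Finset.sum_congr rfl fun j _ =>
                Finsupp.fst_sumFinsuppEquivProdFinsupp s.1 j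
          _ = m₁ := hs1.1)
      obtain ⟨y₁, hy₁⟩ := exists_expOf (m := n₁) bL (by
        rw [hbL]
        calc ∑ j, (Finsupp.sumFinsuppEquivProdFinsupp s.2).1 j
            = ∑ j, s.2 (Sum.inl j) := by
              exact Finset.sum_congr rfl fun j _ =>
                Finsupp.fst_sumFinsuppEquivProdFinsupp s.2 j
          _ = n₁ := hs2.1)
      obtain ⟨x₂, hx₂⟩ := exists_expOf (m := m₂) aR (by
        rw [haR]
        calc ∑ j, (Finsupp.sumFinsuppEquivProdFinsupp s.1).2 j
            = ∑ j, s.1 (Sum.inr j) := by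
              exact Finset.sum_congr rfl fun j _ =>
                Finsupp.snd_sumFinsuppEquivProdFinsupp s.1 j
          _ = m₂ := hs1.2)
      obtain ⟨y₂, hy₂⟩ := exists_expOf (m := n₂) bR (by
        rw [hbR]
        calc ∑ j, (Finsupp.sumFinsuppEquivProdFinsupp s.2).2 j
            = ∑ j, s.2 (Sum.inr j) := by
              exact Finset.sum_congr rfl fun j _ =>
                Finsupp.snd_sumFinsuppEquivProdFinsupp s.2 j
          _ = n₂ := hs2.2)
      have hadd := Finset.HasAntidiagonal.mem_antidiagonal.mp hs
      -- aL + bL = e₁ and aR + bR = e₂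
      have hL : aL + bL = e₁ := by
        ext j
        have := DFunLike.congr_fun hadd (Sum.inl j)
        simp only [Finsupp.add_apply, Finsupp.sumElim_apply, Sum.elim_inl] at this ⊢
        rw [haL, hbL, Finsupp.fst_sumFinsuppEquivProdFinsupp,
          Finsupp.fst_sumFinsuppEquivProdFinsupp]
        exact this
      have hR : aR + bR = e₂ := by
        ext j
        have := DFunLike.congr_fun hadd (Sum.inr j)
        simp only [Finsupp.add_apply, Finsupp.sumElim_apply, Sum.elim_inr] at this ⊢
        rw [haR, hbR, Finsupp.snd_sumFinsuppEquivProdFinsupp,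
          Finsupp.snd_sumFinsuppEquivProdFinsupp]
        exact this
      apply hsnot
      rw [Finset.mem_image]
      refine ⟨((aL, bL), (aR, bR)), ?_, ?_⟩
      · rw [Finset.mem_product]
        constructor
        · rw [hA₁, Finset.mem_image]
          refine ⟨(x₁, y₁), ?_, by simp [gmap, hx₁, hy₁]⟩
          simp only [Dset, mem_filter, mem_univ, true_and]
          rw [hx₁, hy₁, hL]
        · rw [hA₂, Finset.mem_image]
          refine ⟨(x₂, y₂), ?_, by simp [gmap, hx₂, hy₂]⟩
          simp only [Dset, mem_filter, mem_univ, true_and]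
          rw [hx₂, hy₂, hR]
      · have e1 : Finsupp.sumElim aL aR = s.1 := (eq_sumElim s.1).symm
        have e2 : Finsupp.sumElim bL bR = s.2 := (eq_sumElim s.2).symm
        show (Finsupp.sumElim aL aR, Finsupp.sumElim bL bR) = s
        rw [e1, e2]
  rw [step1, step2, step3, step4]

end comb

open Finset in
lemma pull2 {α β : Type*} [Fintype α] [Fintype β] (r : ℝ) (g : α → β → ℝ) :
    ∑ a, ∑ b, r * g a b = r * ∑ a, ∑ b, g a b := by
  rw [Finset.mul_sum]
  exact Finset.sum_congr rfl fun a _ => by rw [Finset.mul_sum]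

lemma pull2' {α β : Type*} [Fintype α] [Fintype β] (x y : ℝ) (g : α → β → ℝ) :
    x * (∑ a, ∑ b, g a b) * y = ∑ a, ∑ b, x * g a b * y := by
  rw [Finset.mul_sum, Finset.sum_mul]
  exact Finset.sum_congr rfl fun a _ => by rw [Finset.mul_sum, Finset.sum_mul]

lemma swap4 {α β γ δ : Type*} [Fintype α] [Fintype β] [Fintype γ] [Fintype δ]
    (f : α → β → γ → δ → ℝ) :
    ∑ a, ∑ b, ∑ c, ∑ e, f a b c e = ∑ c, ∑ e, ∑ a, ∑ b, f a b c e := by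
  calc ∑ a, ∑ b, ∑ c, ∑ e, f a b c e
      = ∑ a, ∑ c, ∑ b, ∑ e, f a b c e :=
        Finset.sum_congr rfl fun a _ => Finset.sum_comm
    _ = ∑ c, ∑ a, ∑ b, ∑ e, f a b c e := Finset.sum_comm
    _ = ∑ c, ∑ a, ∑ e, ∑ b, f a b c e :=
        Finset.sum_congr rfl fun c _ =>
          Finset.sum_congr rfl fun a _ => Finset.sum_comm
    _ = ∑ c, ∑ e, ∑ a, ∑ b, f a b c e :=
        Finset.sum_congr rfl fun c _ => Finset.sum_comm


section main2
open Finset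
variable {d m₁ m₂ n₁ n₂ : ℕ} (P Q : MvPolynomial (Fin d ⊕ Fin d) ℝ)

lemma identA (hP : IsBiHomogeneous P m₁ m₂) (hQ : IsBiHomogeneous Q n₁ n₂)
    (w₁ : Fin (m₁ + n₁) → Fin d) (w₂ : Fin (m₂ + n₂) → Fin d) :
    Tsym (m₁+n₁) (m₂+n₂) (P*Q) w₁ w₂
      = (((m₁+n₁).factorial : ℝ) * ((m₂+n₂).factorial : ℝ))⁻¹ *
        ∑ σ : Equiv.Perm (Fin (m₁+n₁)), ∑ τ : Equiv.Perm (Fin (m₂+n₂)),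
          Tsym m₁ m₂ P (sp (w₁ ∘ σ)).1 (sp (w₂ ∘ τ)).1 *
            Tsym n₁ n₂ Q (sp (w₁ ∘ σ)).2 (sp (w₂ ∘ τ)).2 := by
  classical
  set K : (Fin (m₁+n₁) → Fin d) → (Fin (m₂+n₂) → Fin d) → ℝ :=
    fun a b => Tsym m₁ m₂ P (sp a).1 (sp b).1 * Tsym n₁ n₂ Q (sp a).2 (sp b).2 with hK
  have h2 : ∀ a, (countOf w₂ : ℝ) * ∑ τ : Equiv.Perm (Fin (m₂+n₂)), K a (w₂ ∘ τ)
      = ((m₂+n₂).factorial : ℝ) * ∑ w₂' ∈ cls w₂, K a w₂' :=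
    fun a => countOf_mul_sum_perm w₂ (fun b => K a b)
  have h1 := countOf_mul_sum_perm w₁
    (fun a => ∑ τ : Equiv.Perm (Fin (m₂+n₂)), K a (w₂ ∘ τ))
  have key : (countOf w₁ : ℝ) * (countOf w₂ : ℝ) *
      (∑ σ : Equiv.Perm (Fin (m₁+n₁)), ∑ τ : Equiv.Perm (Fin (m₂+n₂)), K (w₁ ∘ σ) (w₂ ∘ τ))
      = ((m₁+n₁).factorial : ℝ) * ((m₂+n₂).factorial : ℝ) *
        MvPolynomial.coeff (expOf2 w₁ w₂) (P * Q) := by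
    calc (countOf w₁ : ℝ) * (countOf w₂ : ℝ) *
        (∑ σ : Equiv.Perm (Fin (m₁+n₁)), ∑ τ : Equiv.Perm (Fin (m₂+n₂)), K (w₁ ∘ σ) (w₂ ∘ τ))
        = (countOf w₂ : ℝ) * ((countOf w₁ : ℝ) *
            ∑ σ : Equiv.Perm (Fin (m₁+n₁)), ∑ τ : Equiv.Perm (Fin (m₂+n₂)),
              K (w₁ ∘ σ) (w₂ ∘ τ)) := by ring
      _ = (countOf w₂ : ℝ) * (((m₁+n₁).factorial : ℝ) *
            ∑ w₁' ∈ cls w₁, ∑ τ : Equiv.Perm (Fin (m₂+n₂)), K w₁' (w₂ ∘ τ)) := by rw [h1]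
      _ = ((m₁+n₁).factorial : ℝ) * ((countOf w₂ : ℝ) *
            ∑ w₁' ∈ cls w₁, ∑ τ : Equiv.Perm (Fin (m₂+n₂)), K w₁' (w₂ ∘ τ)) := by ring
      _ = ((m₁+n₁).factorial : ℝ) *
            ∑ w₁' ∈ cls w₁, ((countOf w₂ : ℝ) *
              ∑ τ : Equiv.Perm (Fin (m₂+n₂)), K w₁' (w₂ ∘ τ)) := by rw [Finset.mul_sum]
      _ = ((m₁+n₁).factorial : ℝ) *
            ∑ w₁' ∈ cls w₁, (((m₂+n₂).factorial : ℝ) * ∑ w₂' ∈ cls w₂, K w₁' w₂') := by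
          rw [Finset.sum_congr rfl fun w₁' _ => h2 w₁']
      _ = ((m₁+n₁).factorial : ℝ) * ((m₂+n₂).factorial : ℝ) *
            ∑ w₁' ∈ cls w₁, ∑ w₂' ∈ cls w₂, K w₁' w₂' := by
          rw [← Finset.mul_sum]; ring
      _ = ((m₁+n₁).factorial : ℝ) * ((m₂+n₂).factorial : ℝ) *
            MvPolynomial.coeff (expOf2 w₁ w₂) (P * Q) := by
          rw [identB P Q hP hQ w₁ w₂]
  have hc₁ : (countOf w₁ : ℝ) ≠ 0 := Nat.cast_ne_zero.mpr (countOf_pos w₁).ne'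
  have hc₂ : (countOf w₂ : ℝ) ≠ 0 := Nat.cast_ne_zero.mpr (countOf_pos w₂).ne'
  have hN₁ : ((m₁+n₁).factorial : ℝ) ≠ 0 := Nat.cast_ne_zero.mpr (Nat.factorial_ne_zero _)
  have hN₂ : ((m₂+n₂).factorial : ℝ) ≠ 0 := Nat.cast_ne_zero.mpr (Nat.factorial_ne_zero _)
  simp only [hK] at key
  have hNne : (((m₁+n₁).factorial : ℝ) * ((m₂+n₂).factorial : ℝ)) ≠ 0 :=
    mul_ne_zero hN₁ hN₂
  rw [Tsym, eq_inv_mul_iff_mul_eq₀ hNne]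
  field_simp
  linear_combination -key


end main2

open Finset in
/-- Submultiplicativity of the operator norm of symmetric tensorizations:
`‖T_sym(PQ)‖_op ≤ ‖T_sym(P)‖_op · ‖T_sym(Q)‖_op`. -/
theorem tsym_opNorm_mul {d m₁ m₂ n₁ n₂ : ℕ} (P Q : MvPolynomial (Fin d ⊕ Fin d) ℝ)
    (hP : IsBiHomogeneous P m₁ m₂) (hQ : IsBiHomogeneous Q n₁ n₂) :
    matOpNorm (Tsym (m₁+n₁) (m₂+n₂) (P*Q)) ≤
      matOpNorm (Tsym m₁ m₂ P) * matOpNorm (Tsym n₁ n₂ Q) := by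
  classical
  set A := Tsym m₁ m₂ P with hA
  set B := Tsym n₁ n₂ Q with hB
  have hgoal : matOpNorm (Tsym (m₁+n₁) (m₂+n₂) (P*Q)) = mnorm (Tsym (m₁+n₁) (m₂+n₂) (P*Q)) := rfl
  have hA' : matOpNorm A = mnorm A := rfl
  have hB' : matOpNorm B = mnorm B := rfl
  rw [hgoal, hA', hB']
  have hC : 0 ≤ mnorm A * mnorm B := mul_nonneg (mnorm_nonneg A) (mnorm_nonneg B)
  refine mnorm_le_of_bilinear hC _ fun u v => ?_
  set c : ℝ := ((m₁+n₁).factorial : ℝ) * ((m₂+n₂).factorial : ℝ) with hc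
  have hcpos : 0 < c := by
    rw [hc]; positivity
  -- the reindexing equivalences
  set e₁ : (Equiv.Perm (Fin (m₁+n₁))) →
      ((Fin m₁ → Fin d) × (Fin n₁ → Fin d)) ≃ (Fin (m₁+n₁) → Fin d) :=
    fun σ => sp.symm.trans (Equiv.arrowCongr σ (Equiv.refl (Fin d))) with he₁
  set e₂ : (Equiv.Perm (Fin (m₂+n₂))) →
      ((Fin m₂ → Fin d) × (Fin n₂ → Fin d)) ≃ (Fin (m₂+n₂) → Fin d) :=
    fun τ => sp.symm.trans (Equiv.arrowCongr τ (Equiv.refl (Fin d))) with he₂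
  have he₁c : ∀ σ p, (e₁ σ p) ∘ ⇑σ = sp.symm p := by
    intro σ p; funext x; simp [he₁, Equiv.arrowCongr]
  have he₂c : ∀ τ q, (e₂ τ q) ∘ ⇑τ = sp.symm q := by
    intro τ q; funext x; simp [he₂, Equiv.arrowCongr]
  -- step 1: rewrite the bilinear sum using identA and swap sums
  have step1 : ∑ w₁, ∑ w₂, u w₁ * Tsym (m₁+n₁) (m₂+n₂) (P*Q) w₁ w₂ * v w₂
      = c⁻¹ * ∑ σ : Equiv.Perm (Fin (m₁+n₁)), ∑ τ : Equiv.Perm (Fin (m₂+n₂)),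
          ∑ w₁, ∑ w₂, u w₁ *
            (A (sp (w₁ ∘ σ)).1 (sp (w₂ ∘ τ)).1 * B (sp (w₁ ∘ σ)).2 (sp (w₂ ∘ τ)).2) * v w₂ := by
    have hper : ∀ w₁ w₂, u w₁ * Tsym (m₁+n₁) (m₂+n₂) (P*Q) w₁ w₂ * v w₂
        = c⁻¹ * ∑ σ : Equiv.Perm (Fin (m₁+n₁)), ∑ τ : Equiv.Perm (Fin (m₂+n₂)),
            u w₁ *
              (A (sp (w₁ ∘ σ)).1 (sp (w₂ ∘ τ)).1 * B (sp (w₁ ∘ σ)).2 (sp (w₂ ∘ τ)).2) * v w₂ := by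
      intro w₁ w₂
      rw [identA P Q hP hQ w₁ w₂, ← hc, ← hA, ← hB]
      rw [show u w₁ * (c⁻¹ * ∑ σ : Equiv.Perm (Fin (m₁+n₁)), ∑ τ : Equiv.Perm (Fin (m₂+n₂)),
          A (sp (w₁ ∘ σ)).1 (sp (w₂ ∘ τ)).1 * B (sp (w₁ ∘ σ)).2 (sp (w₂ ∘ τ)).2) * v w₂
        = c⁻¹ * (u w₁ * (∑ σ : Equiv.Perm (Fin (m₁+n₁)), ∑ τ : Equiv.Perm (Fin (m₂+n₂)),
          A (sp (w₁ ∘ σ)).1 (sp (w₂ ∘ τ)).1 * B (sp (w₁ ∘ σ)).2 (sp (w₂ ∘ τ)).2) * v w₂)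
        from by ring]
      rw [pull2' (u w₁) (v w₂)]
    calc ∑ w₁, ∑ w₂, u w₁ * Tsym (m₁+n₁) (m₂+n₂) (P*Q) w₁ w₂ * v w₂
        = ∑ w₁, ∑ w₂, (c⁻¹ * ∑ σ : Equiv.Perm (Fin (m₁+n₁)),
            ∑ τ : Equiv.Perm (Fin (m₂+n₂)), u w₁ *
              (A (sp (w₁ ∘ σ)).1 (sp (w₂ ∘ τ)).1 * B (sp (w₁ ∘ σ)).2 (sp (w₂ ∘ τ)).2) *
                v w₂) :=
          Finset.sum_congr rfl fun w₁ _ => Finset.sum_congr rfl fun w₂ _ => hper w₁ w₂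
      _ = c⁻¹ * ∑ w₁, ∑ w₂, ∑ σ : Equiv.Perm (Fin (m₁+n₁)),
            ∑ τ : Equiv.Perm (Fin (m₂+n₂)), u w₁ *
              (A (sp (w₁ ∘ σ)).1 (sp (w₂ ∘ τ)).1 * B (sp (w₁ ∘ σ)).2 (sp (w₂ ∘ τ)).2) *
                v w₂ := pull2 c⁻¹ _
      _ = c⁻¹ * ∑ σ : Equiv.Perm (Fin (m₁+n₁)), ∑ τ : Equiv.Perm (Fin (m₂+n₂)),
            ∑ w₁, ∑ w₂, u w₁ *
              (A (sp (w₁ ∘ σ)).1 (sp (w₂ ∘ τ)).1 * B (sp (w₁ ∘ σ)).2 (sp (w₂ ∘ τ)).2) *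
                v w₂ := by rw [swap4]
  -- step 2: bound each (σ,τ) term
  have step2 : ∀ (σ : Equiv.Perm (Fin (m₁+n₁))) (τ : Equiv.Perm (Fin (m₂+n₂))),
      |∑ w₁, ∑ w₂, u w₁ *
          (A (sp (w₁ ∘ σ)).1 (sp (w₂ ∘ τ)).1 * B (sp (w₁ ∘ σ)).2 (sp (w₂ ∘ τ)).2) * v w₂|
        ≤ mnorm A * mnorm B * ‖u‖ * ‖v‖ := by
    intro σ τ
    set U : EuclideanSpace ℝ ((Fin m₁ → Fin d) × (Fin n₁ → Fin d)) :=
      WithLp.toLp 2 (fun p => u (e₁ σ p)) with hU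
    set V : EuclideanSpace ℝ ((Fin m₂ → Fin d) × (Fin n₂ → Fin d)) :=
      WithLp.toLp 2 (fun q => v (e₂ τ q)) with hV
    have hUnorm : ‖U‖ = ‖u‖ := norm_comp_equiv (e₁ σ) u U fun p => rfl
    have hVnorm : ‖V‖ = ‖v‖ := norm_comp_equiv (e₂ τ) v V fun q => rfl
    have hsum : ∑ w₁, ∑ w₂, u w₁ *
        (A (sp (w₁ ∘ σ)).1 (sp (w₂ ∘ τ)).1 * B (sp (w₁ ∘ σ)).2 (sp (w₂ ∘ τ)).2) * v w₂
        = ∑ p, ∑ q, U p * (A p.1 q.1 * B p.2 q.2) * V q := by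
      rw [← Fintype.sum_equiv (e₁ σ)
        (fun p => ∑ w₂, U p *
          (A (sp ((e₁ σ p) ∘ σ)).1 (sp (w₂ ∘ τ)).1 * B (sp ((e₁ σ p) ∘ σ)).2 (sp (w₂ ∘ τ)).2) * v w₂)
        (fun w₁ => ∑ w₂, u w₁ *
          (A (sp (w₁ ∘ σ)).1 (sp (w₂ ∘ τ)).1 * B (sp (w₁ ∘ σ)).2 (sp (w₂ ∘ τ)).2) * v w₂)
        (fun p => rfl)]
      refine Finset.sum_congr rfl fun p _ => ?_
      rw [← Fintype.sum_equiv (e₂ τ)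
        (fun q => U p *
          (A (sp ((e₁ σ p) ∘ σ)).1 (sp ((e₂ τ q) ∘ τ)).1 *
            B (sp ((e₁ σ p) ∘ σ)).2 (sp ((e₂ τ q) ∘ τ)).2) * V q)
        (fun w₂ => U p *
          (A (sp ((e₁ σ p) ∘ σ)).1 (sp (w₂ ∘ τ)).1 * B (sp ((e₁ σ p) ∘ σ)).2 (sp (w₂ ∘ τ)).2) * v w₂)
        (fun q => rfl)]
      refine Finset.sum_congr rfl fun q _ => ?_
      rw [he₁c σ p, he₂c τ q]
      simp
    rw [hsum, ← hUnorm, ← hVnorm]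
    exact kron_bilinear_le A B U V
  -- assemble
  rw [step1]
  have habs : |c⁻¹ * ∑ σ : Equiv.Perm (Fin (m₁+n₁)), ∑ τ : Equiv.Perm (Fin (m₂+n₂)),
      ∑ w₁, ∑ w₂, u w₁ *
        (A (sp (w₁ ∘ σ)).1 (sp (w₂ ∘ τ)).1 * B (sp (w₁ ∘ σ)).2 (sp (w₂ ∘ τ)).2) * v w₂|
      ≤ c⁻¹ * (c * (mnorm A * mnorm B * ‖u‖ * ‖v‖)) := by
    rw [abs_mul, abs_of_nonneg (by positivity : (0:ℝ) ≤ c⁻¹)]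
    refine mul_le_mul_of_nonneg_left ?_ (by positivity)
    calc |∑ σ : Equiv.Perm (Fin (m₁+n₁)), ∑ τ : Equiv.Perm (Fin (m₂+n₂)),
        ∑ w₁, ∑ w₂, u w₁ *
          (A (sp (w₁ ∘ σ)).1 (sp (w₂ ∘ τ)).1 * B (sp (w₁ ∘ σ)).2 (sp (w₂ ∘ τ)).2) * v w₂|
        ≤ ∑ σ : Equiv.Perm (Fin (m₁+n₁)), ∑ τ : Equiv.Perm (Fin (m₂+n₂)),
            (mnorm A * mnorm B * ‖u‖ * ‖v‖) := by
          refine (Finset.abs_sum_le_sum_abs _ _).trans (Finset.sum_le_sum fun σ _ => ?_)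
          refine (Finset.abs_sum_le_sum_abs _ _).trans (Finset.sum_le_sum fun τ _ => ?_)
          exact step2 σ τ
      _ = c * (mnorm A * mnorm B * ‖u‖ * ‖v‖) := by
          simp only [Finset.sum_const, smul_smul, smul_eq_mul, Finset.card_univ,
            Fintype.card_perm, Fintype.card_fin, hc]
          push_cast
          ring
  calc |c⁻¹ * _| ≤ c⁻¹ * (c * (mnorm A * mnorm B * ‖u‖ * ‖v‖)) := habs
    _ = mnorm A * mnorm B * ‖u‖ * ‖v‖ := by
        field_simp
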